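/- Let n be a natural number and let X, Y be nonzero n×n complex matrices. If sin Θ(X,Y) = 0, then sin Θ(|X*|,|Y*|) = 0 and sin Θ(|X|,|Y|) = 0. -/

import Mathlib

open Matrix
open scoped ComplexOrder

/-- Hilbert–Schmidt (Frobenius) norm: ‖X‖₂ = √(Re Tr(XᴴX)). -/
noncomputable def hsNorm {n : ℕ} (X : Matrix (Fin n) (Fin n) ℂ) : ℝ :=
  Real.sqrt ((Matrix.trace (Xᴴ * X)).re)

/-- Angle Θ(X,Y) = arccos(Re Tr(YᴴX) / (‖X‖₂‖Y‖₂)). -/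
noncomputable def theta {n : ℕ} (X Y : Matrix (Fin n) (Fin n) ℂ) : ℝ :=
  Real.arccos ((Matrix.trace (Yᴴ * X)).re / (hsNorm X * hsNorm Y))

/-- |X| : the positive semidefinite square root of XᴴX. -/
noncomputable def matAbs {n : ℕ} (X : Matrix (Fin n) (Fin n) ℂ) : Matrix (Fin n) (Fin n) ℂ :=
  let hA := (Matrix.posSemidef_conjTranspose_mul_self X).1
  (hA.eigenvectorUnitary : Matrix (Fin n) (Fin n) ℂ) *
    diagonal ((↑) ∘ (fun i => Real.sqrt (hA.eigenvalues i))) *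
    (star hA.eigenvectorUnitary : Matrix (Fin n) (Fin n) ℂ)

namespace Stmt12Aux

variable {n : ℕ}

/-- The matrix as a vector in Euclidean space. -/
noncomputable def vec (X : Matrix (Fin n) (Fin n) ℂ) : EuclideanSpace ℂ (Fin n × Fin n) :=
  (WithLp.equiv 2 _).symm (fun p => X p.1 p.2)

lemma vec_inj {X Y : Matrix (Fin n) (Fin n) ℂ} (h : vec X = vec Y) : X = Y := by
  ext i j
  exact congrFun (congrArg (WithLp.equiv 2 _) h) (i, j)

lemma vec_smul (c : ℂ) (X : Matrix (Fin n) (Fin n) ℂ) : vec (c • X) = c • vec X := rfl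

lemma vec_neg (X : Matrix (Fin n) (Fin n) ℂ) : vec (-X) = -vec X := rfl

lemma inner_vec (X Y : Matrix (Fin n) (Fin n) ℂ) :
    (inner ℂ (vec Y) (vec X) : ℂ) = Matrix.trace (Yᴴ * X) := by
  simp only [vec, PiLp.inner_apply, RCLike.inner_apply, WithLp.equiv_symm_apply, PiLp.toLp_apply,
    Matrix.trace, Matrix.diag, Matrix.mul_apply, Matrix.conjTranspose_apply,
    Fintype.sum_prod_type]
  simp only [RCLike.star_def]
  rw [Finset.sum_comm]
  exact Finset.sum_congr rfl fun _ _ => Finset.sum_congr rfl fun _ _ => mul_comm _ _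

lemma norm_vec (X : Matrix (Fin n) (Fin n) ℂ) : ‖vec X‖ = hsNorm X := by
  rw [norm_eq_sqrt_re_inner (𝕜 := ℂ), hsNorm]
  congr 1
  rw [inner_vec]
  rfl

lemma trace_re_eq (X : Matrix (Fin n) (Fin n) ℂ) :
    (Matrix.trace (Xᴴ * X)).re = ∑ i, ∑ j, Complex.normSq (X j i) := by
  simp [Matrix.trace, Matrix.diag, Matrix.mul_apply, Complex.normSq_apply, Complex.mul_re]

lemma trace_re_pos {X : Matrix (Fin n) (Fin n) ℂ} (hX : X ≠ 0) :
    0 < (Matrix.trace (Xᴴ * X)).re := by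
  rw [trace_re_eq]
  have hne : ∃ i j, X i j ≠ 0 := by
    by_contra hc
    push_neg at hc
    exact hX (by ext i j; simpa using hc i j)
  obtain ⟨i, j, hij⟩ := hne
  have h1 : 0 < Complex.normSq (X i j) := Complex.normSq_pos.mpr hij
  rw [Finset.sum_comm]
  calc (0:ℝ) < ∑ k, Complex.normSq (X i k) := by
        exact Finset.sum_pos' (fun k _ => Complex.normSq_nonneg _) ⟨j, Finset.mem_univ _, h1⟩
    _ ≤ ∑ a, ∑ b, Complex.normSq (X a b) := by
        refine Finset.single_le_sum (f := fun a => ∑ b, Complex.normSq (X a b)) ?_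
          (Finset.mem_univ i)
        intro k _
        exact Finset.sum_nonneg fun l _ => Complex.normSq_nonneg _

lemma hsNorm_pos {X : Matrix (Fin n) (Fin n) ℂ} (hX : X ≠ 0) : 0 < hsNorm X :=
  Real.sqrt_pos.mpr (trace_re_pos hX)

lemma smul_eq_of_re_inner {a b : EuclideanSpace ℂ (Fin n × Fin n)}
    (h : (inner ℂ a b : ℂ).re = ‖a‖ * ‖b‖) : (‖b‖ : ℂ) • a = (‖a‖ : ℂ) • b := by
  set z : ℂ := inner ℂ a b with hz
  have habs : ‖z‖ ≤ ‖a‖ * ‖b‖ := by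
    simpa [hz] using norm_inner_le_norm (𝕜 := ℂ) a b
  have hre : z.re ≤ ‖z‖ := Complex.re_le_norm z
  have heq : ‖z‖ = z.re := le_antisymm (h ▸ habs) hre
  have hsq : (‖z‖) ^ 2 = z.re ^ 2 + z.im ^ 2 := by
    rw [Complex.sq_norm, Complex.normSq_apply]; ring
  have him2 : z.im ^ 2 = 0 := by
    have h7 : z.re ^ 2 = z.re ^ 2 + z.im ^ 2 := by rw [← hsq, heq]
    linarith
  have him : z.im = 0 := by
    have := sq_eq_zero_iff.mp him2
    exact this
  have hz' : z = ((‖a‖ * ‖b‖ : ℝ) : ℂ) := by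
    apply Complex.ext <;> simp [him, h]
  exact inner_eq_norm_mul_iff.mp (by rw [← hz, hz', Complex.ofReal_mul]; norm_cast)

lemma exists_real_smul {X Y : Matrix (Fin n) (Fin n) ℂ} (hX : X ≠ 0) (hY : Y ≠ 0)
    (h : Real.sin (theta X Y) = 0) : ∃ c : ℝ, c ≠ 0 ∧ Y = (c : ℂ) • X := by
  set R : ℝ := (Matrix.trace (Yᴴ * X)).re with hR
  have hNX : 0 < hsNorm X := hsNorm_pos hX
  have hNY : 0 < hsNorm Y := hsNorm_pos hY
  set t : ℝ := R / (hsNorm X * hsNorm Y) with ht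
  have h1 : Real.sqrt (1 - t ^ 2) = 0 := by
    rw [theta, Real.sin_arccos] at h; exact h
  have h2 : 1 ≤ t ^ 2 := by
    have := (Real.sqrt_eq_zero' ).mp h1
    linarith
  have hprod : 0 < hsNorm X * hsNorm Y := mul_pos hNX hNY
  have h3 : hsNorm X * hsNorm Y ≤ |R| := by
    have habs : 1 ≤ |t| := by
      nlinarith [abs_nonneg t, sq_abs t]
    rw [ht, abs_div, abs_of_pos hprod] at habs
    calc hsNorm X * hsNorm Y = (hsNorm X * hsNorm Y) * 1 := by ring
      _ ≤ (hsNorm X * hsNorm Y) * (|R| / (hsNorm X * hsNorm Y)) := by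
          exact mul_le_mul_of_nonneg_left habs (le_of_lt hprod)
      _ = |R| := by field_simp
  have hCS : |R| ≤ hsNorm X * hsNorm Y := by
    have h4 : ‖(inner ℂ (vec Y) (vec X) : ℂ)‖ ≤ ‖vec Y‖ * ‖vec X‖ := by
      simpa using norm_inner_le_norm (𝕜 := ℂ) (vec Y) (vec X)
    have h5 : |R| ≤ ‖(inner ℂ (vec Y) (vec X) : ℂ)‖ := by
      rw [hR, ← inner_vec]; exact Complex.abs_re_le_norm _
    calc |R| ≤ ‖vec Y‖ * ‖vec X‖ := h5.trans h4
      _ = hsNorm X * hsNorm Y := by rw [norm_vec, norm_vec]; ring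
  have heq : |R| = hsNorm X * hsNorm Y := le_antisymm hCS h3
  rcases abs_eq (le_of_lt hprod) |>.mp heq with hpos | hneg
  · -- R = ‖X‖‖Y‖ : Y = c • X with c > 0
    have hkey : (inner ℂ (vec Y) (vec X) : ℂ).re = ‖vec Y‖ * ‖vec X‖ := by
      rw [inner_vec, norm_vec, norm_vec, ← hR, hpos]; ring
    have := smul_eq_of_re_inner hkey
    rw [norm_vec, norm_vec, ← vec_smul, ← vec_smul] at this
    have hm := vec_inj this
    refine ⟨hsNorm Y / hsNorm X, by positivity, ?_⟩
    have hthis : Y = ((hsNorm X : ℂ))⁻¹ • ((hsNorm Y : ℂ) • X) := by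
      rw [← hm, smul_smul, inv_mul_cancel₀ (by exact_mod_cast hNX.ne'), one_smul]
    have hsc : ((hsNorm X : ℂ))⁻¹ * (hsNorm Y : ℂ) = ((hsNorm Y / hsNorm X : ℝ) : ℂ) := by
      push_cast
      ring
    conv_lhs => rw [hthis]
    rw [smul_smul, hsc]
  · -- R = -‖X‖‖Y‖
    have hkey : (inner ℂ (vec Y) (vec (-X)) : ℂ).re = ‖vec Y‖ * ‖vec (-X)‖ := by
      rw [inner_vec, norm_vec, norm_vec]
      have : Matrix.trace (Yᴴ * (-X)) = -Matrix.trace (Yᴴ * X) := by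
        rw [Matrix.mul_neg, Matrix.trace_neg]
      rw [this]
      have hhs : hsNorm (-X) = hsNorm X := by
        unfold hsNorm
        congr 2
        rw [Matrix.conjTranspose_neg, Matrix.neg_mul, Matrix.mul_neg, neg_neg]
      rw [hhs]
      simp only [Complex.neg_re, ← hR, hneg]
      ring
    have := smul_eq_of_re_inner hkey
    rw [norm_vec, norm_vec, ← vec_smul, ← vec_smul] at this
    have hm := vec_inj this
    have hhs : hsNorm (-X) = hsNorm X := by
      unfold hsNorm
      congr 2
      rw [Matrix.conjTranspose_neg, Matrix.neg_mul, Matrix.mul_neg, neg_neg]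
    rw [hhs] at hm
    refine ⟨-(hsNorm Y / hsNorm X), neg_ne_zero.mpr (by positivity), ?_⟩
    have h6 : (hsNorm X : ℂ) • Y = (hsNorm Y : ℂ) • (-X) := hm
    have hthis : Y = ((hsNorm X : ℂ))⁻¹ • ((hsNorm Y : ℂ) • (-X)) := by
      rw [← h6, smul_smul, inv_mul_cancel₀ (by exact_mod_cast hNX.ne'), one_smul]
    have hsc : -(((hsNorm X : ℂ))⁻¹ * (hsNorm Y : ℂ)) = ((-(hsNorm Y / hsNorm X) : ℝ) : ℂ) := by
      push_cast
      ring
    conv_lhs => rw [hthis]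
    rw [smul_smul, smul_neg, ← neg_smul, hsc]

lemma posSemidef_real_smul {A : Matrix (Fin n) (Fin n) ℂ} (hA : A.PosSemidef) {r : ℝ}
    (hr : 0 ≤ r) : ((r : ℂ) • A).PosSemidef := by
  exact hA.smul (Complex.zero_le_real.mpr hr)

lemma matAbs_eq_cfc (X : Matrix (Fin n) (Fin n) ℂ) :
    matAbs X = cfc Real.sqrt (Xᴴ * X) := by
  rw [(Matrix.posSemidef_conjTranspose_mul_self X).1.cfc_eq, Matrix.IsHermitian.cfc,
    Unitary.conjStarAlgAut_apply]
  rfl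

lemma matAbs_smul (c : ℝ) (X : Matrix (Fin n) (Fin n) ℂ) :
    matAbs ((c : ℂ) • X) = ((|c| : ℝ) : ℂ) • matAbs X := by
  have hA : IsSelfAdjoint (Xᴴ * X) := (Matrix.posSemidef_conjTranspose_mul_self X).1
  have hmat : ((c : ℂ) • X)ᴴ * ((c : ℂ) • X) = (c ^ 2 : ℝ) • (Xᴴ * X) := by
    rw [Matrix.conjTranspose_smul, Matrix.smul_mul, Matrix.mul_smul, smul_smul,
      Complex.star_def, Complex.conj_ofReal, ← Complex.ofReal_mul, ← sq]
    ext i j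
    simp [Complex.real_smul]
  rw [matAbs_eq_cfc, matAbs_eq_cfc, hmat, ← cfc_comp_smul (c ^ 2) Real.sqrt (Xᴴ * X)]
  have hf : (fun x : ℝ => Real.sqrt (c ^ 2 • x)) = fun x => |c| * Real.sqrt x := by
    funext x
    rw [smul_eq_mul, Real.sqrt_mul (sq_nonneg c), Real.sqrt_sq_eq_abs]
  rw [hf, cfc_const_mul |c| Real.sqrt (Xᴴ * X)]
  ext i j
  simp [Complex.real_smul]

lemma matAbs_ne_zero {X : Matrix (Fin n) (Fin n) ℂ} (hX : X ≠ 0) : matAbs X ≠ 0 := by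
  intro hc
  have hsq : (matAbs X) ^ 2 = Xᴴ * X := by
    have hP := Matrix.posSemidef_conjTranspose_mul_self X
    have hA : IsSelfAdjoint (Xᴴ * X) := hP.1
    have hspec : ∀ x ∈ spectrum ℝ (Xᴴ * X), 0 ≤ x := by
      intro x hx
      rw [hP.1.spectrum_real_eq_range_eigenvalues] at hx
      obtain ⟨i, rfl⟩ := hx
      exact hP.eigenvalues_nonneg i
    rw [matAbs_eq_cfc, pow_two, ← cfc_mul Real.sqrt Real.sqrt (Xᴴ * X),
      cfc_congr (g := fun x => x) (fun x hx => Real.mul_self_sqrt (hspec x hx)), cfc_id' (R := ℝ) (a := Xᴴ * X)]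
  rw [hc] at hsq
  simp only [pow_two, Matrix.zero_mul] at hsq
  exact hX (Matrix.conjTranspose_mul_self_eq_zero.mp hsq.symm)

lemma sin_theta_smul {A : Matrix (Fin n) (Fin n) ℂ} (hA : A ≠ 0) {c : ℝ} (hc : 0 < c) :
    Real.sin (theta A ((c : ℂ) • A)) = 0 := by
  set T : ℝ := (Matrix.trace (Aᴴ * A)).re with hT
  have hTpos : 0 < T := trace_re_pos hA
  have htr : (Matrix.trace (((c : ℂ) • A)ᴴ * A)).re = c * T := by
    rw [Matrix.conjTranspose_smul, Matrix.smul_mul, Matrix.trace_smul]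
    rw [Complex.star_def, Complex.conj_ofReal]
    simp [Complex.re_ofReal_mul, hT]
  have hhs : hsNorm ((c : ℂ) • A) = c * hsNorm A := by
    unfold hsNorm
    rw [Matrix.conjTranspose_smul, Matrix.smul_mul, Matrix.mul_smul, smul_smul,
      Matrix.trace_smul, Complex.star_def, Complex.conj_ofReal]
    have : ((c : ℂ) * c) • Matrix.trace (Aᴴ * A) = ((c * c : ℝ) : ℂ) * Matrix.trace (Aᴴ * A) := by
      push_cast; rw [smul_eq_mul]
    rw [this, Complex.re_ofReal_mul, ← hT]
    rw [show c * c * T = (c * Real.sqrt T)^2 by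
      rw [mul_pow, Real.sq_sqrt (le_of_lt hTpos)]; ring]
    rw [Real.sqrt_sq (by positivity)]
  rw [theta, htr, hhs]
  have hsn : hsNorm A = Real.sqrt T := rfl
  rw [hsn]
  have hden : Real.sqrt T * (c * Real.sqrt T) = c * T := by
    rw [show Real.sqrt T * (c * Real.sqrt T) = c * (Real.sqrt T * Real.sqrt T) by ring,
      Real.mul_self_sqrt (le_of_lt hTpos)]
  rw [hden, div_self (by positivity), Real.arccos_one, Real.sin_zero]

end Stmt12Aux

open Stmt12Aux in
theorem stmt_12 {n : ℕ} (X Y : Matrix (Fin n) (Fin n) ℂ) (hX : X ≠ 0) (hY : Y ≠ 0)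
    (h : Real.sin (theta X Y) = 0) :
    Real.sin (theta (matAbs Xᴴ) (matAbs Yᴴ)) = 0 ∧
    Real.sin (theta (matAbs X) (matAbs Y)) = 0 := by
  obtain ⟨c, hc0, hYX⟩ := exists_real_smul hX hY h
  have habs : 0 < |c| := abs_pos.mpr hc0
  constructor
  · have hYH : Yᴴ = (c : ℂ) • Xᴴ := by
      rw [hYX, Matrix.conjTranspose_smul, Complex.star_def, Complex.conj_ofReal]
    rw [hYH, matAbs_smul]
    exact sin_theta_smul (matAbs_ne_zero (by simpa using hX)) habs
  · rw [hYX, matAbs_smul]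
    exact sin_theta_smul (matAbs_ne_zero hX) habs
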